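/- Let G be a compact topological group with normalized Haar probability measure μ, and let K be a closed subgroup such that (G,K) is a Gelfand pair, i.e. for all continuous bi-K-invariant functions f,g : G → ℂ the convolutions satisfy f⋆g = g⋆f. Let V be a finite-dimensional complex inner product space and let φ : G → U(V) be a continuous irreducible unitary representation, with character χ_φ(x) = tr(φ(x)). Let u : G → ℂ be a continuous bi-K-invariant function and set û(φ) = ∫_G u(x)·φ(x⁻¹) dμ(x) ∈ End(V). Then tr(û(φ)) = ∫_G u(x)·conj(χ_φ(x)) dμ(x) and û(φ) ∘ û(φ) = tr(û(φ)) · û(φ); in particular, every nonzero eigenvalue of û(φ) equals ⟨u, χ_φ⟩ = ∫_G u(x)·conj(χ_φ(x)) dμ(x). -/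

import Mathlib

open MeasureTheory ComplexConjugate

noncomputable section

section Aux

variable {V : Type*} [NormedAddCommGroup V] [InnerProductSpace ℂ V] [FiniteDimensional ℂ V]

lemma aux_trace_adjoint (A : V →ₗ[ℂ] V) :
    LinearMap.trace ℂ V (LinearMap.adjoint A) = conj (LinearMap.trace ℂ V A) := by
  let b := stdOrthonormalBasis ℂ V
  rw [LinearMap.trace_eq_matrix_trace ℂ b.toBasis, LinearMap.trace_eq_matrix_trace ℂ b.toBasis,
    LinearMap.toMatrix_adjoint b b, Matrix.trace_conjTranspose]
  rfl

lemma aux_trace_rankOne (f : V →ₗ[ℂ] ℂ) (c : V) :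
    LinearMap.trace ℂ V (LinearMap.toSpanSingleton ℂ V c ∘ₗ f) = f c := by
  rw [LinearMap.trace_comp_comm']
  have h : f ∘ₗ LinearMap.toSpanSingleton ℂ V c = f c • LinearMap.id := by
    ext
    simp [LinearMap.toSpanSingleton_apply, mul_comm]
  rw [h, LinearMap.map_smul, LinearMap.trace_id]
  simp

end Aux

set_option maxHeartbeats 2000000 in
theorem fourier_coefficient_of_biinvariant_function_gelfand
    {G : Type*} [Group G] [TopologicalSpace G] [IsTopologicalGroup G] [CompactSpace G]
    [MeasurableSpace G] [BorelSpace G]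
    (μ : Measure G) [μ.IsHaarMeasure] [IsProbabilityMeasure μ]
    (K : Subgroup G) (hK : IsClosed (K : Set G))
    -- `(G, K)` is a Gelfand pair: continuous bi-`K`-invariant functions commute under convolution
    (hGelfand : ∀ f g : G → ℂ, Continuous f → Continuous g →
      (∀ k₁ ∈ K, ∀ k₂ ∈ K, ∀ x : G, f (k₁ * x * k₂) = f x) →
      (∀ k₁ ∈ K, ∀ k₂ ∈ K, ∀ x : G, g (k₁ * x * k₂) = g x) →
      ∀ x : G, (∫ y, f y * g (y⁻¹ * x) ∂μ) = ∫ y, g y * f (y⁻¹ * x) ∂μ)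
    {V : Type*} [NormedAddCommGroup V] [InnerProductSpace ℂ V] [FiniteDimensional ℂ V]
    -- a continuous irreducible unitary representation of `G` on `V`
    (φ : G →* (V →L[ℂ] V)) (hφcont : Continuous φ)
    (hφunitary : ∀ g : G, φ g ∈ unitary (V →L[ℂ] V))
    (hφirred : ∀ W : Submodule ℂ V, (∀ g : G, ∀ w ∈ W, φ g w ∈ W) → W = ⊥ ∨ W = ⊤)
    -- the character of `φ`
    (χ : G → ℂ) (hχ : ∀ x : G, χ x = LinearMap.trace ℂ V (φ x : V →ₗ[ℂ] V))
    -- a continuous bi-`K`-invariant function `u` and its Fourier transform `û(φ)`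
    (u : G → ℂ) (hu : Continuous u)
    (huinv : ∀ k₁ ∈ K, ∀ k₂ ∈ K, ∀ g : G, u (k₁ * g * k₂) = u g)
    (uhat : V →L[ℂ] V) (huhat : uhat = ∫ x, u x • φ x⁻¹ ∂μ) :
    LinearMap.trace ℂ V (uhat : V →ₗ[ℂ] V) = (∫ x, u x * conj (χ x) ∂μ)
    ∧ uhat ∘L uhat = (LinearMap.trace ℂ V (uhat : V →ₗ[ℂ] V)) • uhat
    ∧ ∀ c : ℂ, c ≠ 0 →
        Module.End.HasEigenvalue (uhat : V →ₗ[ℂ] V) c →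
        c = ∫ x, u x * conj (χ x) ∂μ := by
  classical
  haveI : CompleteSpace V := FiniteDimensional.complete ℂ V
  -- Haar measure on a compact group is right-invariant and inversion-invariant
  haveI hmr : μ.IsMulRightInvariant := by
    constructor
    intro g
    have : IsProbabilityMeasure (μ.map (· * g)) :=
      Measure.isProbabilityMeasure_map (measurable_mul_const g).aemeasurable
    exact Measure.isHaarMeasure_eq_of_isProbabilityMeasure _ μ
  haveI hmi : μ.IsInvInvariant := by
    constructor
    have : IsProbabilityMeasure μ.inv :=
      Measure.isProbabilityMeasure_map measurable_inv.aemeasurable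
    have : μ.inv.IsHaarMeasure :=
      { toIsFiniteMeasureOnCompacts := inferInstance
        toIsMulLeftInvariant := inferInstance
        toIsOpenPosMeasure := inferInstance }
    exact Measure.isHaarMeasure_eq_of_isProbabilityMeasure _ μ
  -- integrability of continuous functions
  have intE : ∀ f : G → (V →L[ℂ] V), Continuous f → Integrable f μ := fun f hf =>
    hf.integrable_of_hasCompactSupport (HasCompactSupport.of_compactSpace f)
  -- pushing operations through integrals
  have comp_left : ∀ (A : V →L[ℂ] V) (f : G → (V →L[ℂ] V)), Integrable f μ →
      A ∘L (∫ x, f x ∂μ) = ∫ x, A ∘L f x ∂μ := by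
    intro A f hf
    have := ((ContinuousLinearMap.compL ℂ V V V A).integral_comp_comm hf).symm
    simpa using this
  have comp_right : ∀ (A : V →L[ℂ] V) (f : G → (V →L[ℂ] V)), Integrable f μ →
      (∫ x, f x ∂μ) ∘L A = ∫ x, f x ∘L A ∂μ := by
    intro A f hf
    have := (((ContinuousLinearMap.compL ℂ V V V).flip A).integral_comp_comm hf).symm
    simpa using this
  have apply_int : ∀ (b : V) (f : G → (V →L[ℂ] V)), Integrable f μ →
      (∫ x, f x ∂μ) b = ∫ x, f x b ∂μ := by
    intro b f hf
    exact ContinuousLinearMap.integral_apply hf b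
  -- trace through integrals
  have trace_int : ∀ (f : G → (V →L[ℂ] V)), Integrable f μ →
      LinearMap.trace ℂ V ((∫ x, f x ∂μ : V →L[ℂ] V) : V →ₗ[ℂ] V)
        = ∫ x, LinearMap.trace ℂ V (f x : V →ₗ[ℂ] V) ∂μ := by
    intro f hf
    let T : (V →L[ℂ] V) →L[ℂ] ℂ :=
      LinearMap.toContinuousLinearMap ((LinearMap.trace ℂ V) ∘ₗ (ContinuousLinearMap.coeLM ℂ))
    have := (T.integral_comp_comm hf).symm
    simpa [T] using this
  -- `φ x⁻¹` is `star (φ x)`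
  have hstar : ∀ x : G, star (φ x) = φ x⁻¹ := by
    intro x
    have h1 : star (φ x) * φ x = 1 := (hφunitary x).1
    have h2 : φ x * φ x⁻¹ = 1 := by rw [← map_mul, mul_inv_cancel, map_one]
    calc star (φ x) = star (φ x) * (φ x * φ x⁻¹) := by rw [h2, mul_one]
      _ = (star (φ x) * φ x) * φ x⁻¹ := by rw [mul_assoc]
      _ = φ x⁻¹ := by rw [h1, one_mul]
  -- `φ` preserves the inner ℂ product
  have hpres : ∀ (g : G) (x y : V), (inner ℂ (φ g x) (φ g y) : ℂ) = inner ℂ x y := by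
    intro g x y
    have h1 : star (φ g) * φ g = 1 := (hφunitary g).1
    calc (inner ℂ (φ g x) (φ g y) : ℂ)
        = inner ℂ x (ContinuousLinearMap.adjoint (φ g) (φ g y)) := by
          rw [ContinuousLinearMap.adjoint_inner_right]
      _ = inner ℂ x ((star (φ g) * φ g) y) := by
          rw [ContinuousLinearMap.star_eq_adjoint]; rfl
      _ = inner ℂ x y := by rw [h1]; rfl
  -- the coercion of `φ x⁻¹` is the adjoint of that of `φ x`
  have hadj : ∀ x : G, ((φ x⁻¹ : V →L[ℂ] V) : V →ₗ[ℂ] V)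
      = LinearMap.adjoint ((φ x : V →L[ℂ] V) : V →ₗ[ℂ] V) := by
    intro x
    rw [LinearMap.eq_adjoint_iff]
    intro a b
    have h2 : φ x (φ x⁻¹ a) = a := by
      rw [← ContinuousLinearMap.comp_apply, ← ContinuousLinearMap.mul_def, ← map_mul,
        mul_inv_cancel, map_one, ContinuousLinearMap.one_apply]
    calc (inner ℂ ((φ x⁻¹) a) b : ℂ) = inner ℂ (φ x (φ x⁻¹ a)) (φ x b) := (hpres x _ b).symm
      _ = inner ℂ a (φ x b) := by rw [h2]
  -- integrability of the integrand defining `uhat`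
  have hint_u : Integrable (fun x => u x • φ x⁻¹) μ :=
    intE _ (hu.smul (hφcont.comp continuous_inv))
  -- Part 1 : the trace formula
  have htrace : LinearMap.trace ℂ V (uhat : V →ₗ[ℂ] V) = ∫ x, u x * conj (χ x) ∂μ := by
    rw [huhat, trace_int _ hint_u]
    refine integral_congr_ae (Filter.Eventually.of_forall fun x => ?_)
    dsimp only
    have hcoe : ((u x • φ x⁻¹ : V →L[ℂ] V) : V →ₗ[ℂ] V)
        = u x • ((φ x⁻¹ : V →L[ℂ] V) : V →ₗ[ℂ] V) := rfl
    rw [hcoe, LinearMap.map_smul, hadj x, aux_trace_adjoint, ← hχ x, smul_eq_mul]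
  refine ⟨htrace, ?_⟩
  have main2 : uhat ∘L uhat = (LinearMap.trace ℂ V (uhat : V →ₗ[ℂ] V)) • uhat := by
    by_cases hV : Subsingleton V
    · ext v; exact Subsingleton.elim _ _
    · haveI : Nontrivial V := not_subsingleton_iff_nontrivial.mp hV
      set d : ℂ := (Module.finrank ℂ V : ℂ) with hd
      have hd0 : d ≠ 0 := Nat.cast_ne_zero.mpr Module.finrank_pos.ne'
      -- Schur averaging: `∫ φ x ∘ B ∘ φ x⁻¹ = (tr B / d) • 1`
      have schur : ∀ B : V →L[ℂ] V,
          (∫ x, φ x ∘L (B ∘L φ x⁻¹) ∂μ)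
            = ((LinearMap.trace ℂ V (B : V →ₗ[ℂ] V)) / d) • (1 : V →L[ℂ] V) := by
        intro B
        have hFc : Continuous fun x : G => φ x ∘L (B ∘L φ x⁻¹) :=
          hφcont.clm_comp (continuous_const.clm_comp (hφcont.comp continuous_inv))
        have hFi := intE _ hFc
        set T : V →L[ℂ] V := ∫ x, φ x ∘L (B ∘L φ x⁻¹) ∂μ with hT
        have hcomm : ∀ g : G, φ g ∘L T = T ∘L φ g := by
          intro g
          rw [hT, comp_left _ _ hFi, comp_right _ _ hFi]
          have e1 : (fun x => φ g ∘L (φ x ∘L (B ∘L φ x⁻¹)))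
              = fun x => φ (g * x) ∘L (B ∘L φ ((g * x)⁻¹ * g)) := by
            funext x
            have h1 : (g * x)⁻¹ * g = x⁻¹ := by group
            rw [h1, map_mul, ContinuousLinearMap.mul_def, ContinuousLinearMap.comp_assoc]
          have e2 : (fun x => φ x ∘L (B ∘L φ (x⁻¹ * g)))
              = fun x => (φ x ∘L (B ∘L φ x⁻¹)) ∘L φ g := by
            funext x
            rw [map_mul, ContinuousLinearMap.mul_def, ContinuousLinearMap.comp_assoc,
              ContinuousLinearMap.comp_assoc]
          calc ∫ x, φ g ∘L (φ x ∘L (B ∘L φ x⁻¹)) ∂μ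
              = ∫ x, φ (g * x) ∘L (B ∘L φ ((g * x)⁻¹ * g)) ∂μ := by rw [e1]
            _ = ∫ x, φ x ∘L (B ∘L φ (x⁻¹ * g)) ∂μ :=
                integral_mul_left_eq_self (fun y => φ y ∘L (B ∘L φ (y⁻¹ * g))) g
            _ = ∫ x, (φ x ∘L (B ∘L φ x⁻¹)) ∘L φ g ∂μ := by rw [e2]
        obtain ⟨c, hc⟩ := Module.End.exists_eigenvalue (T : V →ₗ[ℂ] V)
        have hstab : ∀ g : G, ∀ w ∈ Module.End.eigenspace (T : V →ₗ[ℂ] V) c,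
            φ g w ∈ Module.End.eigenspace (T : V →ₗ[ℂ] V) c := by
          intro g w hw
          rw [Module.End.mem_eigenspace_iff] at hw ⊢
          have happ := congrArg (fun A : V →L[ℂ] V => A w) (hcomm g)
          simp only [ContinuousLinearMap.comp_apply] at happ
          calc (T : V →ₗ[ℂ] V) (φ g w) = T (φ g w) := rfl
            _ = φ g (T w) := happ.symm
            _ = φ g (c • w) := by rw [show T w = c • w from hw]
            _ = c • φ g w := by rw [ContinuousLinearMap.map_smul]
        have hWtop : Module.End.eigenspace (T : V →ₗ[ℂ] V) c = ⊤ := by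
          rcases hφirred _ hstab with h | h
          · exact absurd h hc
          · exact h
        have hTw : ∀ w : V, T w = c • w := by
          intro w
          have hw : w ∈ Module.End.eigenspace (T : V →ₗ[ℂ] V) c := hWtop ▸ Submodule.mem_top
          exact Module.End.mem_eigenspace_iff.mp hw
        have hTs : T = c • (1 : V →L[ℂ] V) := by
          ext w
          simp [hTw w]
        have htrT : LinearMap.trace ℂ V (T : V →ₗ[ℂ] V)
            = LinearMap.trace ℂ V (B : V →ₗ[ℂ] V) := by
          rw [hT, trace_int _ hFi]
          have hpt : ∀ x : G,
              LinearMap.trace ℂ V ((φ x ∘L (B ∘L φ x⁻¹) : V →L[ℂ] V) : V →ₗ[ℂ] V)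
                = LinearMap.trace ℂ V (B : V →ₗ[ℂ] V) := by
            intro x
            have hco : ((φ x ∘L (B ∘L φ x⁻¹) : V →L[ℂ] V) : V →ₗ[ℂ] V)
                = ((φ x : V →L[ℂ] V) : V →ₗ[ℂ] V)
                    ∘ₗ (((B ∘L φ x⁻¹ : V →L[ℂ] V)) : V →ₗ[ℂ] V) := rfl
            rw [hco, LinearMap.trace_comp_comm']
            have hco2 : (((B ∘L φ x⁻¹ : V →L[ℂ] V)) : V →ₗ[ℂ] V)
                ∘ₗ ((φ x : V →L[ℂ] V) : V →ₗ[ℂ] V) = (B : V →ₗ[ℂ] V) := by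
              have h2 : φ x⁻¹ * φ x = (1 : V →L[ℂ] V) := by
                rw [← map_mul, inv_mul_cancel, map_one]
              have h5 : φ x⁻¹ ∘L φ x = ContinuousLinearMap.id ℂ V := by
                rw [← ContinuousLinearMap.mul_def, h2]
                rfl
              have h6 : (B ∘L φ x⁻¹) ∘L φ x = B := by
                rw [ContinuousLinearMap.comp_assoc, h5, ContinuousLinearMap.comp_id]
              rw [← ContinuousLinearMap.toLinearMap_comp, h6]
            rw [hco2]
          simp_rw [hpt]
          simp
        rw [hTs] at htrT
        have hco1 : ((c • (1 : V →L[ℂ] V) : V →L[ℂ] V) : V →ₗ[ℂ] V)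
            = c • (LinearMap.id : V →ₗ[ℂ] V) := rfl
        rw [hco1, LinearMap.map_smul, LinearMap.trace_id, smul_eq_mul] at htrT
        have hcd : c * d = LinearMap.trace ℂ V (B : V →ₗ[ℂ] V) := by
          rw [← htrT, hd, mul_comm]
        rw [hTs, ← hcd, mul_div_cancel_right₀ c hd0]
      -- the rank-one formula for the hat of a matrix coefficient
      have key : ∀ a b w : V,
          (∫ x, (inner ℂ a (φ x b) : ℂ) • φ x⁻¹ ∂μ) w = ((inner ℂ a w : ℂ) / d) • b := by
        intro a b w
        have hmc0 : Continuous fun x : G => (inner ℂ a (φ x b) : ℂ) :=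
          Continuous.inner continuous_const (hφcont.clm_apply continuous_const)
        have hmc : Continuous fun x : G => (inner ℂ a (φ x b) : ℂ) • φ x⁻¹ :=
          hmc0.smul (hφcont.comp continuous_inv)
        set Bw : V →L[ℂ] V := (innerSL ℂ a).smulRight w with hBw
        have hBc : Continuous fun x : G => φ x⁻¹ ∘L (Bw ∘L φ x) :=
          (hφcont.comp continuous_inv).clm_comp (continuous_const.clm_comp hφcont)
        rw [apply_int _ _ (intE _ hmc)]
        have e : (fun x => ((inner ℂ a (φ x b) : ℂ) • φ x⁻¹) w)
            = fun x => (φ x⁻¹ ∘L (Bw ∘L φ x)) b := by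
          funext x
          simp [hBw, ContinuousLinearMap.smulRight_apply, ContinuousLinearMap.map_smul]
        rw [e, ← apply_int _ _ (intE _ hBc)]
        have einv : (∫ x, φ x⁻¹ ∘L (Bw ∘L φ x) ∂μ) = ∫ x, φ x ∘L (Bw ∘L φ x⁻¹) ∂μ := by
          have h := integral_inv_eq_self (fun y => φ y ∘L (Bw ∘L φ y⁻¹)) μ
          simp only [inv_inv] at h
          exact h
        rw [einv, schur Bw]
        have htrBw : LinearMap.trace ℂ V (Bw : V →ₗ[ℂ] V) = (inner ℂ a w : ℂ) := by
          have hco : (Bw : V →ₗ[ℂ] V)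
              = LinearMap.toSpanSingleton ℂ V w ∘ₗ ((innerSL ℂ a : V →L[ℂ] ℂ) : V →ₗ[ℂ] ℂ) := by
            ext y
            simp [hBw, LinearMap.toSpanSingleton_apply]
          rw [hco, aux_trace_rankOne]
          simp
        rw [htrBw]
        simp
      -- continuity and bi-invariance of matrix coefficients
      have mcont : ∀ a b : V, Continuous fun x : G => (inner ℂ a (φ x b) : ℂ) := fun a b =>
        Continuous.inner continuous_const (hφcont.clm_apply continuous_const)
      have minv : ∀ a b : V, (∀ k ∈ K, φ k a = a) → (∀ k ∈ K, φ k b = b) →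
          ∀ k₁ ∈ K, ∀ k₂ ∈ K, ∀ x : G,
            (inner ℂ a (φ (k₁ * x * k₂) b) : ℂ) = inner ℂ a (φ x b) := by
        intro a b ha hb k₁ hk₁ k₂ hk₂ x
        have h1 : φ (k₁ * x * k₂) b = φ k₁ (φ x b) := by
          rw [map_mul, map_mul]
          simp only [ContinuousLinearMap.mul_apply]
          rw [hb k₂ hk₂]
        rw [h1]
        calc (inner ℂ a (φ k₁ (φ x b)) : ℂ)
            = inner ℂ (φ k₁ a) (φ k₁ (φ x b)) := by rw [ha k₁ hk₁]
          _ = inner ℂ a (φ x b) := hpres k₁ _ _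
      -- the hat of a convolution is the composition of the hats (in reverse order)
      have convhat : ∀ f g : G → ℂ, Continuous f → Continuous g →
          (∫ x, (∫ y, f y * g (y⁻¹ * x) ∂μ) • φ x⁻¹ ∂μ)
            = (∫ x, g x • φ x⁻¹ ∂μ) ∘L (∫ x, f x • φ x⁻¹ ∂μ) := by
        intro f g hf hg
        have h1 : (fun x => (∫ y, f y * g (y⁻¹ * x) ∂μ) • φ x⁻¹)
            = fun x => ∫ y, (f y * g (y⁻¹ * x)) • φ x⁻¹ ∂μ := by
          funext x
          exact (integral_smul_const _ _).symm
        rw [h1]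
        have hcu : Continuous (Function.uncurry fun x y => (f y * g (y⁻¹ * x)) • φ x⁻¹) := by
          show Continuous (fun p : G × G => (f p.2 * g (p.2⁻¹ * p.1)) • φ p.1⁻¹)
          apply Continuous.fun_smul
          · exact (hf.comp continuous_snd).mul
              (hg.comp ((continuous_snd.inv).mul continuous_fst))
          · exact hφcont.comp continuous_fst.inv
        rw [integral_integral_swap_of_hasCompactSupport hcu
          (HasCompactSupport.of_compactSpace _)]
        have h2 : ∀ y : G, (∫ x, (f y * g (y⁻¹ * x)) • φ x⁻¹ ∂μ)
            = (∫ x, g x • φ x⁻¹ ∂μ) ∘L (f y • φ y⁻¹) := by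
          intro y
          have hgi : Integrable (fun x => g x • φ x⁻¹) μ :=
            intE _ (hg.smul (hφcont.comp continuous_inv))
          calc ∫ x, (f y * g (y⁻¹ * x)) • φ x⁻¹ ∂μ
              = f y • ∫ x, g (y⁻¹ * x) • φ x⁻¹ ∂μ := by
                rw [← integral_smul]
                congr 1
                funext x
                rw [mul_smul]
            _ = f y • ∫ x, g x • φ (x⁻¹ * y⁻¹) ∂μ := by
                congr 1
                have e3 : (fun x => g (y⁻¹ * x) • φ x⁻¹)
                    = fun x => g (y⁻¹ * x) • φ ((y⁻¹ * x)⁻¹ * y⁻¹) := by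
                  funext x
                  have : (y⁻¹ * x)⁻¹ * y⁻¹ = x⁻¹ := by group
                  rw [this]
                rw [e3]
                exact integral_mul_left_eq_self (fun x => g x • φ (x⁻¹ * y⁻¹)) y⁻¹
            _ = f y • ((∫ x, g x • φ x⁻¹ ∂μ) ∘L φ y⁻¹) := by
                congr 1
                rw [comp_right _ _ hgi]
                congr 1
                funext x
                rw [map_mul, ContinuousLinearMap.mul_def, ContinuousLinearMap.smul_comp]
            _ = (∫ x, g x • φ x⁻¹ ∂μ) ∘L (f y • φ y⁻¹) := by
                rw [ContinuousLinearMap.comp_smul]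
        have h3 : (fun y => ∫ x, (f y * g (y⁻¹ * x)) • φ x⁻¹ ∂μ)
            = fun y => (∫ x, g x • φ x⁻¹ ∂μ) ∘L (f y • φ y⁻¹) := funext h2
        rw [h3]
        exact (comp_left _ _ (intE _ (hf.smul (hφcont.comp continuous_inv)))).symm
      -- the range of `uhat` consists of `K`-fixed vectors
      have hrangeC : ∀ k ∈ K, φ k ∘L uhat = uhat := by
        intro k hk
        have hinv2 := integral_inv_eq_self (fun x => u x⁻¹ • φ x) μ
        simp only [inv_inv] at hinv2
        have h1 : uhat = ∫ x, u x⁻¹ • φ x ∂μ := by rw [huhat]; exact hinv2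
        have hint1 : Integrable (fun x => u x⁻¹ • φ x) μ :=
          intE _ ((hu.comp continuous_inv).smul hφcont)
        rw [h1, comp_left _ _ hint1]
        have e1 : (fun x => φ k ∘L (u x⁻¹ • φ x))
            = fun x => u ((k * x)⁻¹ * k) • φ (k * x) := by
          funext x
          have h3 : (k * x)⁻¹ * k = x⁻¹ := by group
          rw [h3, map_mul, ContinuousLinearMap.mul_def, ContinuousLinearMap.comp_smul]
        rw [e1, integral_mul_left_eq_self (fun x => u (x⁻¹ * k) • φ x) k]
        have e2 : (fun x => u (x⁻¹ * k) • φ x) = fun x => u x⁻¹ • φ x := by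
          funext x
          have h4 : u (x⁻¹ * k) = u x⁻¹ := by
            have := huinv 1 (one_mem K) k hk x⁻¹
            rwa [one_mul] at this
          rw [h4]
        rw [e2]
      have hrange : ∀ k ∈ K, ∀ a : V, φ k (uhat a) = uhat a := by
        intro k hk a
        have := congrArg (fun A : V →L[ℂ] V => A a) (hrangeC k hk)
        simpa using this
      -- conclude
      by_cases h0 : uhat = 0
      · rw [h0]
        simp
      · obtain ⟨a, ha⟩ : ∃ a : V, uhat a ≠ 0 := by
          by_contra hcon
          push_neg at hcon
          exact h0 (by ext v; simp [hcon v])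
        set e : V := uhat a with he
        have hePK : ∀ k ∈ K, φ k e = e := fun k hk => hrange k hk a
        have hee : (inner ℂ e e : ℂ) ≠ 0 := fun hcon => ha (inner_self_eq_zero.mp hcon)
        have hdep : ∀ b : V, ∃ t : ℂ, uhat b = t • e := by
          intro b
          set w : V := uhat b with hw
          have hwPK : ∀ k ∈ K, φ k w = w := fun k hk => hrange k hk b
          have hconv := hGelfand (fun x => (inner ℂ e (φ x e) : ℂ))
            (fun x => (inner ℂ e (φ x w) : ℂ)) (mcont e e) (mcont e w)
            (minv e e hePK hePK) (minv e w hePK hwPK)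
          have hhat := congrArg (fun F : G → ℂ => ∫ x, F x • φ x⁻¹ ∂μ) (funext hconv)
          rw [convhat _ _ (mcont e e) (mcont e w), convhat _ _ (mcont e w) (mcont e e)] at hhat
          have h2 := congrArg (fun A : V →L[ℂ] V => A e) hhat
          simp only [ContinuousLinearMap.comp_apply] at h2
          rw [key e e e, key e w e, ContinuousLinearMap.map_smul,
            ContinuousLinearMap.map_smul, key e w e, key e e w] at h2
          set t : ℂ := (inner ℂ e e : ℂ) / d with hts
          have htne : t ≠ 0 := div_ne_zero hee hd0
          rw [smul_smul, smul_smul] at h2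
          have h4 : ((t * t))⁻¹ • ((t * t) • w) = ((t * t))⁻¹ • ((t * ((inner ℂ e w : ℂ) / d)) • e) := by
            rw [h2]
          rw [inv_smul_smul₀ (mul_ne_zero htne htne), smul_smul] at h4
          exact ⟨_, h4⟩
        set sL : V →ₗ[ℂ] ℂ :=
          (inner ℂ e e : ℂ)⁻¹ • ((((innerSL ℂ e).comp uhat : V →L[ℂ] ℂ)) : V →ₗ[ℂ] ℂ) with hsL
        have hsL_app : ∀ b : V, uhat b = sL b • e := by
          intro b
          obtain ⟨t, ht⟩ := hdep b
          have hsb : sL b = t := by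
            simp only [hsL, LinearMap.smul_apply, ContinuousLinearMap.coe_coe,
              ContinuousLinearMap.comp_apply, innerSL_apply_apply]
            rw [ht]
            simp [inner_smul_right]
            field_simp [hee, ha]
          rw [hsb, ht]
        have hcuh : (uhat : V →ₗ[ℂ] V) = LinearMap.toSpanSingleton ℂ V e ∘ₗ sL := by
          ext b
          simp [hsL_app b, LinearMap.toSpanSingleton_apply]
        have htr2 : LinearMap.trace ℂ V (uhat : V →ₗ[ℂ] V) = sL e := by
          rw [hcuh, aux_trace_rankOne]
        ext b
        simp only [ContinuousLinearMap.comp_apply, ContinuousLinearMap.smul_apply]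
        rw [hsL_app b, ContinuousLinearMap.map_smul, hsL_app e, htr2, smul_smul, smul_smul,
          mul_comm]
  refine ⟨main2, ?_⟩
  intro c hc hE
  obtain ⟨x, hx⟩ := hE.exists_hasEigenvector
  have hx1 : uhat x = c • x := hx.apply_eq_smul
  have hmm := congrArg (fun A : V →L[ℂ] V => A x) main2
  simp only [ContinuousLinearMap.comp_apply, ContinuousLinearMap.smul_apply] at hmm
  rw [hx1, ContinuousLinearMap.map_smul, hx1, smul_smul, smul_smul] at hmm
  have hcc : c * c = LinearMap.trace ℂ V (uhat : V →ₗ[ℂ] V) * c :=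
    smul_left_injective ℂ hx.right hmm
  rw [← htrace]
  exact (mul_right_cancel₀ hc hcc.symm).symm

end
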